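/- Let A be a p×r real matrix with orthonormal columns (AᵀA = I_r), B a p×m real matrix with ‖B‖ ≤ 1, and P an m×r real matrix. Let S denote the positive definite square root of I_r + PᵀP. Then the matrix Â := (A + B·P)·S⁻¹ satisfies ‖Â − A‖ ≤ 2·‖P‖. -/

import Mathlib

open Matrix

/-- Spectral norm (operator 2-norm) of a real matrix. -/
noncomputable def spec {m n : ℕ} (M : Matrix (Fin m) (Fin n) ℝ) : ℝ :=
  ‖(LinearMap.toContinuousLinearMap
      (Matrix.toEuclideanLin M : EuclideanSpace ℝ (Fin n) →ₗ[ℝ] EuclideanSpace ℝ (Fin m)))‖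

/-- Smallest singular value: infimum of ‖M·u‖ over unit vectors u. -/
noncomputable def sigmaMin {m n : ℕ} (M : Matrix (Fin m) (Fin n) ℝ) : ℝ :=
  ⨅ u : {u : EuclideanSpace ℝ (Fin n) // ‖u‖ = 1},
    ‖((WithLp.equiv 2 (Fin m → ℝ)).symm (M.mulVec ((WithLp.equiv 2 (Fin n → ℝ)) u.1)))‖

/-- Smallest eigenvalue of a symmetric matrix: infimum of ⟨x, S·x⟩ over unit vectors x. -/
noncomputable def lambdaMin {n : ℕ} (S : Matrix (Fin n) (Fin n) ℝ) : ℝ :=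
  ⨅ x : {x : EuclideanSpace ℝ (Fin n) // ‖x‖ = 1},
    ((WithLp.equiv 2 (Fin n → ℝ)) x.1) ⬝ᵥ S.mulVec ((WithLp.equiv 2 (Fin n → ℝ)) x.1)

noncomputable def en {n : ℕ} (v : Fin n → ℝ) : EuclideanSpace ℝ (Fin n) :=
  (WithLp.equiv 2 (Fin n → ℝ)).symm v

lemma en_norm_sq {n : ℕ} (v : Fin n → ℝ) : ‖en v‖ ^ 2 = v ⬝ᵥ v := by
  rw [← real_inner_self_eq_norm_sq]
  simpa [en] using (EuclideanSpace.inner_toLp_toLp (𝕜 := ℝ) v v)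

lemma en_dot_le {n : ℕ} (v w : Fin n → ℝ) : v ⬝ᵥ w ≤ ‖en v‖ * ‖en w‖ := by
  have := real_inner_le_norm (en v) (en w)
  simpa [en, EuclideanSpace.inner_toLp_toLp, dotProduct_comm] using this

lemma spec_nonneg {m n : ℕ} (M : Matrix (Fin m) (Fin n) ℝ) : 0 ≤ spec M :=
  norm_nonneg _

lemma spec_apply_le {m n : ℕ} (M : Matrix (Fin m) (Fin n) ℝ) (v : Fin n → ℝ) :
    ‖en (M *ᵥ v)‖ ≤ spec M * ‖en v‖ := by
  have := (LinearMap.toContinuousLinearMap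
      (Matrix.toEuclideanLin M : EuclideanSpace ℝ (Fin n) →ₗ[ℝ]
        EuclideanSpace ℝ (Fin m))).le_opNorm (en v)
  simpa [en, spec, Matrix.toEuclideanLin_apply] using this

lemma spec_le {m n : ℕ} {M : Matrix (Fin m) (Fin n) ℝ} {c : ℝ} (hc : 0 ≤ c)
    (h : ∀ v : Fin n → ℝ, ‖en (M *ᵥ v)‖ ≤ c * ‖en v‖) : spec M ≤ c := by
  apply ContinuousLinearMap.opNorm_le_bound _ hc
  intro x
  simpa [en, Matrix.toEuclideanLin_apply] using h ((WithLp.equiv 2 (Fin n → ℝ)) x)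

lemma norm_le_of_sq_le {a b : ℝ} (hb : 0 ≤ b) (h : a ^ 2 ≤ b ^ 2) (ha : 0 ≤ a) : a ≤ b := by
  nlinarith

lemma dot_mulVec_left {a b : ℕ} (M : Matrix (Fin a) (Fin b) ℝ) (v : Fin b → ℝ)
    (w : Fin a → ℝ) : (M *ᵥ v) ⬝ᵥ w = v ⬝ᵥ (Mᵀ *ᵥ w) := by
  rw [dotProduct_comm, dotProduct_mulVec, ← mulVec_transpose, dotProduct_comm]

lemma spec_mul_le {a b c : ℕ} (M : Matrix (Fin a) (Fin b) ℝ) (N : Matrix (Fin b) (Fin c) ℝ) :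
    spec (M * N) ≤ spec M * spec N := by
  apply spec_le (mul_nonneg (spec_nonneg M) (spec_nonneg N))
  intro v
  rw [← Matrix.mulVec_mulVec]
  calc ‖en (M *ᵥ N *ᵥ v)‖ ≤ spec M * ‖en (N *ᵥ v)‖ := spec_apply_le _ _
    _ ≤ spec M * (spec N * ‖en v‖) :=
      mul_le_mul_of_nonneg_left (spec_apply_le _ _) (spec_nonneg M)
    _ = spec M * spec N * ‖en v‖ := by ring

lemma spec_add_le {a b : ℕ} (M N : Matrix (Fin a) (Fin b) ℝ) :
    spec (M + N) ≤ spec M + spec N := by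
  apply spec_le (add_nonneg (spec_nonneg M) (spec_nonneg N))
  intro v
  rw [Matrix.add_mulVec]
  have : en (M *ᵥ v + N *ᵥ v) = en (M *ᵥ v) + en (N *ᵥ v) := rfl
  rw [this]
  calc ‖en (M *ᵥ v) + en (N *ᵥ v)‖ ≤ ‖en (M *ᵥ v)‖ + ‖en (N *ᵥ v)‖ := norm_add_le _ _
    _ ≤ spec M * ‖en v‖ + spec N * ‖en v‖ := add_le_add (spec_apply_le _ _) (spec_apply_le _ _)
    _ = (spec M + spec N) * ‖en v‖ := by ring

lemma spec_neg {a b : ℕ} (M : Matrix (Fin a) (Fin b) ℝ) : spec (-M) = spec M := by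
  unfold spec
  rw [map_neg, map_neg, norm_neg]

lemma spec_transpose_le {a b : ℕ} (M : Matrix (Fin a) (Fin b) ℝ) : spec Mᵀ ≤ spec M := by
  apply spec_le (spec_nonneg M)
  intro v
  rcases eq_or_lt_of_le (norm_nonneg (en (Mᵀ *ᵥ v))) with h0 | h0
  · rw [← h0]; exact mul_nonneg (spec_nonneg M) (norm_nonneg _)
  · have key : ‖en (Mᵀ *ᵥ v)‖ * ‖en (Mᵀ *ᵥ v)‖ ≤ (spec M * ‖en v‖) * ‖en (Mᵀ *ᵥ v)‖ := by
      have h4 := en_norm_sq (Mᵀ *ᵥ v)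
      have h1 := dot_mulVec_left M (Mᵀ *ᵥ v) v
      have h2 := en_dot_le (M *ᵥ (Mᵀ *ᵥ v)) v
      have h3 := spec_apply_le M (Mᵀ *ᵥ v)
      nlinarith [norm_nonneg (en v), spec_nonneg M]
    exact le_of_mul_le_mul_right key h0

/-- if A is p×r with orthonormal columns, B is p×m with ‖B‖ ≤ 1, P is m×r,
and S is the positive definite square root of I_r + PᵀP, then
Â := (A + B·P)·S⁻¹ satisfies ‖Â − A‖ ≤ 2·‖P‖. -/
theorem perturb_orthonormal_norm_le {p r m : ℕ}
    (A : Matrix (Fin p) (Fin r) ℝ) (hA : Aᵀ * A = 1)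
    (B : Matrix (Fin p) (Fin m) ℝ) (hB : spec B ≤ 1)
    (P : Matrix (Fin m) (Fin r) ℝ)
    (S : Matrix (Fin r) (Fin r) ℝ) (hS : S.PosDef) (hS2 : S * S = 1 + Pᵀ * P) :
    spec ((A + B * P) * S⁻¹ - A) ≤ 2 * spec P := by
  have hSt : Sᵀ = S := by simpa [Matrix.conjTranspose_eq_transpose_of_trivial] using hS.1.eq
  have hdet : IsUnit S.det := isUnit_iff_ne_zero.mpr hS.det_pos.ne'
  have hSinv : S * S⁻¹ = 1 := Matrix.mul_nonsing_inv S hdet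
  have hinvS : S⁻¹ * S = 1 := Matrix.nonsing_inv_mul S hdet
  -- ‖S y‖² = ‖y‖² + ‖P y‖²
  have hdotS : ∀ y : Fin r → ℝ, (S *ᵥ y) ⬝ᵥ (S *ᵥ y) = y ⬝ᵥ y + (P *ᵥ y) ⬝ᵥ (P *ᵥ y) := by
    intro y
    rw [dot_mulVec_left, hSt, Matrix.mulVec_mulVec, hS2, Matrix.add_mulVec,
      Matrix.one_mulVec, dotProduct_add, ← Matrix.mulVec_mulVec, ← dot_mulVec_left]
  have hP_le_S : ∀ y : Fin r → ℝ, ‖en (P *ᵥ y)‖ ≤ ‖en (S *ᵥ y)‖ := by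
    intro y
    apply norm_le_of_sq_le (norm_nonneg _) _ (norm_nonneg _)
    rw [en_norm_sq, en_norm_sq, hdotS]
    have : (0:ℝ) ≤ y ⬝ᵥ y := by
      have := en_norm_sq y; nlinarith [norm_nonneg (en y)]
    linarith
  have hy_le_S : ∀ y : Fin r → ℝ, ‖en y‖ ≤ ‖en (S *ᵥ y)‖ := by
    intro y
    apply norm_le_of_sq_le (norm_nonneg _) _ (norm_nonneg _)
    rw [en_norm_sq, en_norm_sq, hdotS]
    have := en_norm_sq (P *ᵥ y); nlinarith [norm_nonneg (en (P *ᵥ y))]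
  -- spec S⁻¹ ≤ 1
  have hspecSinv : spec S⁻¹ ≤ 1 := by
    apply spec_le zero_le_one
    intro v
    have := hy_le_S (S⁻¹ *ᵥ v)
    rw [Matrix.mulVec_mulVec, hSinv, Matrix.one_mulVec] at this
    linarith
  -- spec A ≤ 1
  have hspecA : spec A ≤ 1 := by
    apply spec_le zero_le_one
    intro v
    apply norm_le_of_sq_le (by positivity) _ (norm_nonneg _)
    rw [one_mul, en_norm_sq, en_norm_sq, dot_mulVec_left, Matrix.mulVec_mulVec, hA,
      Matrix.one_mulVec]
  -- S + 1 is invertible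
  have hS1 : (S + 1).PosDef := by
    refine Matrix.PosDef.of_dotProduct_mulVec_pos ?_ ?_
    · have h1 : (S + 1)ᴴ = Sᴴ + 1 := by simp [Matrix.conjTranspose_add]
      rw [Matrix.IsHermitian, h1, hS.1]
    · intro x hx
      have h2 := hS.dotProduct_mulVec_pos hx
      have h3 : (0:ℝ) < x ⬝ᵥ x := by
        have h4 : x ⬝ᵥ x ≠ 0 := fun h => hx (by rwa [dotProduct_self_eq_zero] at h)
        have h5 : (0:ℝ) ≤ x ⬝ᵥ x := by rw [← en_norm_sq]; positivity
        exact lt_of_le_of_ne h5 (Ne.symm h4)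
      simp only [Matrix.add_mulVec, Matrix.one_mulVec, dotProduct_add] at *
      simp only [star_trivial] at *
      linarith
  have hdet1 : IsUnit (S + 1).det := isUnit_iff_ne_zero.mpr hS1.det_pos.ne'
  have hS1inv : (S + 1) * (S + 1)⁻¹ = 1 := Matrix.mul_nonsing_inv _ hdet1
  -- spec (P * (S+1)⁻¹) ≤ 1
  have hspecT : spec (P * (S + 1)⁻¹) ≤ 1 := by
    apply spec_le zero_le_one
    intro v
    rw [one_mul, ← Matrix.mulVec_mulVec]
    set y := (S + 1)⁻¹ *ᵥ v with hy
    have hv : (S + 1) *ᵥ y = v := by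
      rw [hy, Matrix.mulVec_mulVec, hS1inv, Matrix.one_mulVec]
    rw [← hv]
    apply norm_le_of_sq_le (norm_nonneg _) _ (norm_nonneg _)
    rw [en_norm_sq, en_norm_sq]
    have hexp : ((S + 1) *ᵥ y) ⬝ᵥ ((S + 1) *ᵥ y) =
        (S *ᵥ y) ⬝ᵥ (S *ᵥ y) + 2 * (y ⬝ᵥ (S *ᵥ y)) + y ⬝ᵥ y := by
      rw [Matrix.add_mulVec, Matrix.one_mulVec, dotProduct_add, add_dotProduct,
        add_dotProduct, dot_mulVec_left S y y, hSt]
      ring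
    have hpos : 0 ≤ y ⬝ᵥ (S *ᵥ y) := by
      have := hS.posSemidef.dotProduct_mulVec_nonneg y
      simpa using this
    have hyy : (0:ℝ) ≤ y ⬝ᵥ y := by
      have := en_norm_sq y; nlinarith [norm_nonneg (en y)]
    rw [hexp, hdotS]
    linarith
  -- S - 1 = Pᵀ * (P * (S+1)⁻¹)
  have hfact : S - 1 = Pᵀ * (P * (S + 1)⁻¹) := by
    have h1 : (S - 1) * (S + 1) = Pᵀ * P := by
      rw [Matrix.sub_mul, Matrix.mul_add, Matrix.one_mul, Matrix.mul_one, hS2]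
      abel
    calc S - 1 = (S - 1) * ((S + 1) * (S + 1)⁻¹) := by rw [hS1inv, Matrix.mul_one]
      _ = ((S - 1) * (S + 1)) * (S + 1)⁻¹ := by rw [Matrix.mul_assoc]
      _ = Pᵀ * P * (S + 1)⁻¹ := by rw [h1]
      _ = Pᵀ * (P * (S + 1)⁻¹) := by rw [Matrix.mul_assoc]
  have hspecSm1 : spec (S - 1) ≤ spec P := by
    calc spec (S - 1) = spec (Pᵀ * (P * (S + 1)⁻¹)) := by rw [hfact]
      _ ≤ spec Pᵀ * spec (P * (S + 1)⁻¹) := spec_mul_le _ _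
      _ ≤ spec P * 1 := mul_le_mul (spec_transpose_le P) hspecT (spec_nonneg _) (spec_nonneg _)
      _ = spec P := mul_one _
  -- spec (S⁻¹ - 1) ≤ spec P
  have hspecSinv1 : spec (S⁻¹ - 1) ≤ spec P := by
    have hid : S⁻¹ - 1 = -(S⁻¹ * (S - 1)) := by
      rw [Matrix.mul_sub, Matrix.mul_one, hinvS]
      abel
    calc spec (S⁻¹ - 1) = spec (S⁻¹ * (S - 1)) := by rw [hid, spec_neg]
      _ ≤ spec S⁻¹ * spec (S - 1) := spec_mul_le _ _
      _ ≤ 1 * spec P := mul_le_mul hspecSinv hspecSm1 (spec_nonneg _) zero_le_one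
      _ = spec P := one_mul _
  -- decomposition
  have hdecomp : (A + B * P) * S⁻¹ - A = A * (S⁻¹ - 1) + B * (P * S⁻¹) := by
    rw [Matrix.add_mul, Matrix.mul_sub, Matrix.mul_one, Matrix.mul_assoc]
    abel
  rw [hdecomp]
  have h1 : spec (A * (S⁻¹ - 1)) ≤ spec P := by
    calc spec (A * (S⁻¹ - 1)) ≤ spec A * spec (S⁻¹ - 1) := spec_mul_le _ _
      _ ≤ 1 * spec P := mul_le_mul hspecA hspecSinv1 (spec_nonneg _) zero_le_one
      _ = spec P := one_mul _
  have h2 : spec (B * (P * S⁻¹)) ≤ spec P := by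
    calc spec (B * (P * S⁻¹)) ≤ spec B * spec (P * S⁻¹) := spec_mul_le _ _
      _ ≤ 1 * (spec P * spec S⁻¹) := by
          apply mul_le_mul hB (spec_mul_le _ _) (spec_nonneg _) zero_le_one
      _ ≤ 1 * (spec P * 1) := by
          apply mul_le_mul_of_nonneg_left _ zero_le_one
          exact mul_le_mul_of_nonneg_left hspecSinv (spec_nonneg _)
      _ = spec P := by ring
  calc spec (A * (S⁻¹ - 1) + B * (P * S⁻¹))
      ≤ spec (A * (S⁻¹ - 1)) + spec (B * (P * S⁻¹)) := spec_add_le _ _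
    _ ≤ spec P + spec P := add_le_add h1 h2
    _ = 2 * spec P := by ring
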